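/- For any unweighted graph G on n vertices with all degrees positive, Σ_{u∈V} SC_N(L_G, V∖{u}) = L_{G²} + (n-2)·L_G, where SC_N(L_G, V∖{u}) = L_G - (1/L_{uu}) L_G(:,u) L_G(:,u)ᵀ is the Schur complement of L_G eliminating vertex u (padded back to n×n), and L_{G²} = D - A D^{-1} A. -/

import Mathlib

open Matrix

/-- Summing the one-vertex Schur complements of the Laplacian over all vertices gives
`L_{G²} + (n-2)·L_G`. -/
theorem stmt11 {n : ℕ} (G : SimpleGraph (Fin n)) [DecidableRel G.Adj]
    (hdeg : ∀ u, 0 < G.degree u)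
    (D A LG LG2 : Matrix (Fin n) (Fin n) ℝ)
    (hD : D = Matrix.diagonal fun u => (G.degree u : ℝ))
    (hA : A = G.adjMatrix ℝ)
    (hLG : LG = D - A)
    (hLG2 : LG2 = D - A * Matrix.diagonal (fun u => 1 / (G.degree u : ℝ)) * A) :
    ∑ u : Fin n, (LG - (1 / LG u u) • vecMulVec (fun i => LG i u) (fun i => LG i u))
      = LG2 + ((n : ℝ) - 2) • LG := by
  have hd : ∀ u, (G.degree u : ℝ) ≠ 0 := fun u => by
    exact_mod_cast (hdeg u).ne'
  subst hD hA hLG hLG2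
  set d : Fin n → ℝ := fun u => (G.degree u : ℝ) with hdf
  ext i j
  simp only [Matrix.sum_apply, Matrix.sub_apply, Matrix.add_apply, Matrix.smul_apply,
    vecMulVec_apply, smul_eq_mul]
  have hAii : ∀ u : Fin n, G.adjMatrix ℝ u u = 0 := fun u => by simp
  have hLuu : ∀ u : Fin n,
      ((Matrix.diagonal d - G.adjMatrix ℝ) u u) = d u := fun u => by
    simp [Matrix.diagonal_apply]
  have key : ∀ u : Fin n,
      Matrix.diagonal d i j - G.adjMatrix ℝ i j -
        1 / (Matrix.diagonal d u u - G.adjMatrix ℝ u u) *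
          ((Matrix.diagonal d i u - G.adjMatrix ℝ i u) *
            (Matrix.diagonal d j u - G.adjMatrix ℝ j u))
      = Matrix.diagonal d i j - G.adjMatrix ℝ i j
        - ((if i = u then (if j = u then d i else 0) else 0)
          - (if i = u then G.adjMatrix ℝ j u else 0)
          - (if j = u then G.adjMatrix ℝ i u else 0)
          + G.adjMatrix ℝ i u * (1 / d u) * G.adjMatrix ℝ j u) := by
    intro u
    rw [show Matrix.diagonal d u u - G.adjMatrix ℝ u u = d u by
      simp [Matrix.diagonal_apply]]
    rw [sub_sub, sub_sub]
    congr 1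
    rcases eq_or_ne i u with hi | hi <;> rcases eq_or_ne j u with hj | hj <;>
      simp [Matrix.diagonal_apply, hi, hj, hAii] <;>
      first
        | (split_ifs <;> field_simp [show d u ≠ 0 from hd u] <;> ring)
        | field_simp [show d u ≠ 0 from hd u]
  rw [Finset.sum_congr rfl (fun u _ => key u)]
  rw [Finset.sum_sub_distrib]
  have hsplit :
      (∑ u : Fin n, ((if i = u then (if j = u then d i else 0) else 0)
          - (if i = u then G.adjMatrix ℝ j u else 0)
          - (if j = u then G.adjMatrix ℝ i u else 0)
          + G.adjMatrix ℝ i u * (1 / d u) * G.adjMatrix ℝ j u))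
      = (if j = i then d i else 0) - G.adjMatrix ℝ j i - G.adjMatrix ℝ i j
          + ∑ u : Fin n, G.adjMatrix ℝ i u * (1 / d u) * G.adjMatrix ℝ j u := by
    simp [Finset.sum_add_distrib, Finset.sum_sub_distrib, Finset.sum_ite_eq,
      eq_comm]
  rw [hsplit]
  have hsym : G.adjMatrix ℝ j i = G.adjMatrix ℝ i j := by
    simp [G.adjMatrix_apply, G.adj_comm]
  have hABA : (G.adjMatrix ℝ * Matrix.diagonal (fun u => 1 / d u) * G.adjMatrix ℝ) i j
      = ∑ u : Fin n, G.adjMatrix ℝ i u * (1 / d u) * G.adjMatrix ℝ j u := by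
    rw [Matrix.mul_apply]
    refine Finset.sum_congr rfl fun u _ => ?_
    rw [Matrix.mul_diagonal]
    have : G.adjMatrix ℝ u j = G.adjMatrix ℝ j u := by
      simp [G.adjMatrix_apply, G.adj_comm]
    rw [this]
  simp only [Matrix.sub_apply, hABA, Matrix.diagonal_apply, Finset.sum_const,
    Finset.card_univ, Fintype.card_fin, nsmul_eq_mul, hsym]
  rcases eq_or_ne i j with h | h
  · simp [h, eq_comm]
    rw [G.neighborFinset_eq_filter, Finset.sum_filter]
    simp only [hdf]
    try ring
  · simp [h, eq_comm]
    rw [G.neighborFinset_eq_filter, Finset.sum_filter]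
    simp only [hdf]
    split_ifs <;> ring
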